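/- arXiv:1807.04144 — 4 statements merged into one kernel-verified Lean document; each statement's English description precedes it below -/
import Mathlib

section
/- Let L be the generator of an irreducible continuous-time Markov chain on a finite state space E with unique stationary measure π. Then L can be written as a finite sum L = Σ_{j=1}^p L_{c_j}, where each L_{c_j} is a cycle generator that is stationary with respect to π. -/
open Finset

/-- Generator of a continuous-time Markov chain with jump rates `R`. -/
def mcGen {E : Type*} [Fintype E] (R : E → E → ℝ) (f : E → ℝ) (η : E) : ℝ :=
  ∑ ξ, R η ξ * (f ξ - f η)

/-- `Q` is the rate matrix of a cycle generator: there is a cycle of distinct states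
`e 0, …, e (m+1)` (of length at least two) and positive rates `r i`, such that `Q`
gives rate `r i` to the jump `e i → e (i+1)` and no other jumps. -/
def IsCycleRates {E : Type*} [DecidableEq E] (Q : E → E → ℝ) : Prop :=
  ∃ (m : ℕ) (e : Fin (m + 2) → E) (r : Fin (m + 2) → ℝ),
    Function.Injective e ∧ (∀ i, 0 < r i) ∧
    ∀ x y : E, Q x y = ∑ i : Fin (m + 2), if x = e i ∧ y = e (i + 1) then r i else 0

section helpers
variable {E : Type*} [Fintype E] [DecidableEq E]

/-- The flow along a cycle `e` with constant weight `w`. -/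
def cycFlow {m : ℕ} (e : Fin (m + 2) → E) (w : ℝ) (x y : E) : ℝ :=
  ∑ i : Fin (m + 2), if x = e i ∧ y = e (i + 1) then w else 0

lemma fin_add_one_ne {m : ℕ} (i : Fin (m + 2)) : i + 1 ≠ i := by
  intro h
  have h1 : i + 1 = i + 0 := by simpa using h
  have := add_left_cancel h1
  have hv : (1 : Fin (m + 2)).val = (0 : Fin (m + 2)).val := congrArg Fin.val this
  simp [Fin.val_one] at hv

lemma cycFlow_eq {m : ℕ} {e : Fin (m + 2) → E} (he : Function.Injective e) (w : ℝ)
    (x y : E) :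
    cycFlow e w x y = if ∃ i, x = e i ∧ y = e (i + 1) then w else 0 := by
  classical
  unfold cycFlow
  split_ifs with h
  · obtain ⟨i0, h1, h2⟩ := h
    rw [Finset.sum_eq_single i0]
    · simp [h1, h2]
    · intro j _ hj
      rw [if_neg]
      rintro ⟨hx, -⟩
      exact hj (he (hx ▸ h1.symm ▸ rfl))
    · simp
  · push_neg at h
    refine Finset.sum_eq_zero fun i _ => ?_
    rw [if_neg]
    rintro ⟨hx, hy⟩
    exact h i hx hy

lemma cycFlow_nonneg {m : ℕ} (e : Fin (m + 2) → E) {w : ℝ} (hw : 0 ≤ w) (x y : E) :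
    0 ≤ cycFlow e w x y := by
  apply Finset.sum_nonneg
  intro i _
  split_ifs <;> simp [hw]

lemma cycFlow_diag {m : ℕ} {e : Fin (m + 2) → E} (he : Function.Injective e) (w : ℝ)
    (x : E) : cycFlow e w x x = 0 := by
  rw [cycFlow_eq he]
  rw [if_neg]
  rintro ⟨i, h1, h2⟩
  exact fin_add_one_ne i (he (h2 ▸ h1 ▸ rfl))

lemma cycFlow_div {m : ℕ} (e : Fin (m + 2) → E) (w : ℝ) (z : E) :
    ∑ x, cycFlow e w x z = ∑ y, cycFlow e w z y := by
  unfold cycFlow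
  have hL : ∀ i : Fin (m + 2), (∑ x, if x = e i ∧ z = e (i + 1) then w else 0)
      = if z = e (i + 1) then w else 0 := by
    intro i
    by_cases hz : z = e (i + 1)
    · simp [hz]
    · simp [hz]
  have hR : ∀ i : Fin (m + 2), (∑ y, if z = e i ∧ y = e (i + 1) then w else 0)
      = if z = e i then w else 0 := by
    intro i
    by_cases hz : z = e i
    · simp [hz]
    · simp [hz]
  calc (∑ x, ∑ i : Fin (m + 2), if x = e i ∧ z = e (i + 1) then w else 0)
      = ∑ i : Fin (m + 2), ∑ x, if x = e i ∧ z = e (i + 1) then w else 0 :=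
        Finset.sum_comm
    _ = ∑ i : Fin (m + 2), if z = e (i + 1) then w else 0 :=
        Finset.sum_congr rfl fun i _ => hL i
    _ = ∑ i : Fin (m + 2), if z = e i then w else 0 := ?_
    _ = ∑ i : Fin (m + 2), ∑ y, if z = e i ∧ y = e (i + 1) then w else 0 :=
        (Finset.sum_congr rfl fun i _ => (hR i).symm)
    _ = ∑ y, ∑ i : Fin (m + 2), if z = e i ∧ y = e (i + 1) then w else 0 :=
        Finset.sum_comm
  exact Fintype.sum_bijective (· + 1) (Equiv.addRight (1 : Fin (m+2))).bijective _ _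
    (fun i => rfl)

/-- Pairing a divergence-free flow against gradients gives zero. -/
lemma divfree_pairing (G : E → E → ℝ) (hdiv : ∀ z, ∑ x, G x z = ∑ y, G z y)
    (f : E → ℝ) : ∑ x, ∑ ξ, G x ξ * (f ξ - f x) = 0 := by
  have : ∑ x, ∑ ξ, G x ξ * (f ξ - f x)
      = (∑ x, ∑ ξ, G x ξ * f ξ) - ∑ x, ∑ ξ, G x ξ * f x := by
    rw [← Finset.sum_sub_distrib]
    congr 1; ext x
    rw [← Finset.sum_sub_distrib]
    congr 1; ext ξ
    ring
  rw [this]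
  have h1 : ∑ x, ∑ ξ, G x ξ * f ξ = ∑ ξ, (∑ x, G x ξ) * f ξ := by
    rw [Finset.sum_comm]
    exact Finset.sum_congr rfl fun ξ _ => (Finset.sum_mul _ _ _).symm
  have h2 : ∑ x, ∑ ξ, G x ξ * f x = ∑ x, (∑ ξ, G x ξ) * f x :=
    Finset.sum_congr rfl fun x _ => (Finset.sum_mul _ _ _).symm
  rw [h1, h2]
  rw [sub_eq_zero]
  refine Finset.sum_congr rfl fun z _ => ?_
  rw [hdiv z]

/-- Decomposition of a nonnegative divergence-free flow into cycle flows. -/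
lemma flow_decomp (n : ℕ) (F : E → E → ℝ)
    (hF0 : ∀ x y, 0 ≤ F x y) (hFd : ∀ x, F x x = 0)
    (hdiv : ∀ z, ∑ x, F x z = ∑ y, F z y)
    (hcard : (Finset.univ.filter (fun p : E × E => 0 < F p.1 p.2)).card ≤ n) :
    ∃ (p : ℕ) (C : Fin p → E → E → ℝ),
      (∀ j, ∃ (m : ℕ) (e : Fin (m + 2) → E) (w : ℝ),
        Function.Injective e ∧ 0 < w ∧ C j = cycFlow e w) ∧
      (∀ x y, F x y = ∑ j, C j x y) := by
  classical
  induction n generalizing F with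
  | zero =>
    refine ⟨0, fun j => 0, fun j => j.elim0, fun x y => ?_⟩
    have hS : (Finset.univ.filter (fun p : E × E => 0 < F p.1 p.2)) = ∅ :=
      Finset.card_eq_zero.mp (Nat.le_zero.mp hcard)
    have : ¬ 0 < F x y := by
      intro h
      have : (x, y) ∈ (Finset.univ.filter (fun p : E × E => 0 < F p.1 p.2)) := by
        simp [h]
      simp [hS] at this
    simp [le_antisymm (not_lt.mp this) (hF0 x y)]
  | succ n ih =>
    by_cases hex : ∃ x y, 0 < F x y
    · obtain ⟨x0, y0, h0⟩ := hex
      -- every state with positive inflow has positive outflow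
      have claim : ∀ x : E, (∃ y, 0 < F y x) → ∃ y, 0 < F x y := by
        intro x ⟨y, hy⟩
        by_contra hc
        push_neg at hc
        have hsum : ∑ ξ, F x ξ ≤ 0 := Finset.sum_nonpos fun ξ _ => hc ξ
        have hpos : 0 < ∑ ξ, F ξ x := by
          refine lt_of_lt_of_le hy ?_
          exact Finset.single_le_sum (fun ξ _ => hF0 ξ x) (Finset.mem_univ y)
        rw [hdiv x] at hpos
        linarith
      -- build an infinite path of positive-flow edges
      let next : E → E := fun x => if h : ∃ y, 0 < F x y then h.choose else x
      let path : ℕ → E := fun n => next^[n] y0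
      have haux : ∀ n, ∃ z, 0 < F z (path n) := by
        intro n
        induction n with
        | zero => exact ⟨x0, h0⟩
        | succ k ihk =>
          obtain ⟨hne⟩ : Nonempty (∃ y, 0 < F (path k) y) := ⟨claim _ ihk⟩
          refine ⟨path k, ?_⟩
          have : path (k + 1) = next (path k) := Function.iterate_succ_apply' _ _ _
          rw [this]
          simp only [next, dif_pos hne]
          exact hne.choose_spec
      have hpath : ∀ n, 0 < F (path n) (path (n + 1)) := by
        intro k
        have hne : ∃ y, 0 < F (path k) y := claim _ (haux k)
        have : path (k + 1) = next (path k) := Function.iterate_succ_apply' _ _ _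
        rw [this]
        simp only [next, dif_pos hne]
        exact hne.choose_spec
      -- pigeonhole: the path repeats
      have hP : ∃ b, ∃ a, a < b ∧ path a = path b := by
        obtain ⟨i, j, hij, heq⟩ :=
          Fintype.exists_ne_map_eq_of_card_lt
            (fun i : Fin (Fintype.card E + 1) => path i.val) (by simp)
        rcases lt_or_gt_of_ne (fun h => hij (Fin.ext h)) with h | h
        · exact ⟨j.val, i.val, h, heq⟩
        · exact ⟨i.val, j.val, h, heq.symm⟩
      let b := Nat.find hP
      obtain ⟨a, hab, heq⟩ := Nat.find_spec hP
      have hinj : ∀ i j, i < j → j < b → path i ≠ path j := by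
        intro i j hij hjb hpe
        exact Nat.find_min hP hjb ⟨i, hij, hpe⟩
      have hb2 : a + 2 ≤ b := by
        have h1 : b ≠ a + 1 := by
          intro h
          have := hpath a
          rw [← h, ← heq] at this
          rw [hFd] at this
          exact lt_irrefl 0 this
        omega
      set m : ℕ := b - a - 2 with hm
      have hbm : b = a + m + 2 := by omega
      let e : Fin (m + 2) → E := fun i => path (a + i.val)
      have he : Function.Injective e := by
        intro i j hije
        by_contra hne
        have hvne : i.val ≠ j.val := fun h => hne (Fin.ext h)
        rcases lt_or_gt_of_ne hvne with h | h
        · exact hinj (a + i.val) (a + j.val) (by omega) (by omega) hije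
        · exact hinj (a + j.val) (a + i.val) (by omega) (by omega) hije.symm
      have hE : ∀ i : Fin (m + 2), e (i + 1) = path (a + i.val + 1) := by
        intro i
        by_cases hi : i.val = m + 1
        · have h1 : (i + 1).val = 0 := by
            have : (i + 1).val = (i.val + 1) % (m + 2) := by
              simp [Fin.add_def, Fin.val_one]
            rw [this, hi]
            simp
          show path (a + (i + 1).val) = _
          rw [h1]
          have h2 : a + 0 = a := by omega
          have h3 : a + i.val + 1 = b := by omega
          rw [h2, h3]
          exact heq
        · have h1 : (i + 1).val = i.val + 1 := by
            have hlt : i.val + 1 < m + 2 := by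
              have := i.isLt; omega
            have : (i + 1).val = (i.val + 1) % (m + 2) := by
              simp [Fin.add_def, Fin.val_one]
            rw [this, Nat.mod_eq_of_lt hlt]
          show path (a + (i + 1).val) = _
          rw [h1, ← Nat.add_assoc]
      have hpos : ∀ i : Fin (m + 2), 0 < F (e i) (e (i + 1)) := by
        intro i
        rw [hE i]
        exact hpath (a + i.val)
      -- the weight
      let w : ℝ := Finset.univ.inf' Finset.univ_nonempty fun i : Fin (m + 2) => F (e i) (e (i + 1))
      have hw : 0 < w := by
        rw [Finset.lt_inf'_iff]
        intro i _
        exact hpos i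
      have hwle : ∀ i : Fin (m + 2), w ≤ F (e i) (e (i + 1)) :=
        fun i => Finset.inf'_le _ (Finset.mem_univ i)
      obtain ⟨istar, -, hstar⟩ := Finset.exists_mem_eq_inf' Finset.univ_nonempty
        (fun i : Fin (m + 2) => F (e i) (e (i + 1)))
      -- the reduced flow
      set F' : E → E → ℝ := fun x y => F x y - cycFlow e w x y with hF'
      have hle : ∀ x y, cycFlow e w x y ≤ F x y := by
        intro x y
        rw [cycFlow_eq he]
        split_ifs with h
        · obtain ⟨i, h1, h2⟩ := h
          rw [h1, h2]; exact hwle i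
        · exact hF0 x y
      have hF'0 : ∀ x y, 0 ≤ F' x y := fun x y => sub_nonneg.mpr (hle x y)
      have hF'd : ∀ x, F' x x = 0 := by
        intro x; simp [hF', hFd x, cycFlow_diag he]
      have hF'div : ∀ z, ∑ x, F' x z = ∑ y, F' z y := by
        intro z
        simp only [hF', Finset.sum_sub_distrib]
        rw [hdiv z, cycFlow_div e w z]
      have hssub : (Finset.univ.filter (fun p : E × E => 0 < F' p.1 p.2)) ⊂
          (Finset.univ.filter (fun p : E × E => 0 < F p.1 p.2)) := by
        constructor
        · intro p hp
          simp only [Finset.mem_filter, Finset.mem_univ, true_and] at hp ⊢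
          have := cycFlow_nonneg e hw.le p.1 p.2
          simp only [hF'] at hp
          linarith
        · intro hsub
          have hmem : (e istar, e (istar + 1)) ∈
              (Finset.univ.filter (fun p : E × E => 0 < F p.1 p.2)) := by
            simp [hpos istar]
          have := hsub hmem
          simp only [Finset.mem_filter, Finset.mem_univ, true_and] at this
          have hzero : F' (e istar) (e (istar + 1)) = 0 := by
            simp only [hF']
            rw [cycFlow_eq he, if_pos ⟨istar, rfl, rfl⟩, ← hstar]
            ring
          rw [hzero] at this
          exact lt_irrefl 0 this
      have hcard' : (Finset.univ.filter (fun p : E × E => 0 < F' p.1 p.2)).card ≤ n := by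
        have := Finset.card_lt_card hssub
        omega
      obtain ⟨p, C, hC, hCsum⟩ := ih F' hF'0 hF'd hF'div hcard'
      refine ⟨p + 1, Fin.cons (cycFlow e w) C, ?_, ?_⟩
      · intro j
        refine Fin.cases ?_ ?_ j
        · exact ⟨m, e, w, he, hw, rfl⟩
        · intro k
          simpa using hC k
      · intro x y
        rw [Fin.sum_univ_succ]
        simp only [Fin.cons_zero, Fin.cons_succ]
        have := hCsum x y
        simp only [hF'] at this
        have hcy := cycFlow_nonneg e hw.le x y
        linarith
    · push_neg at hex
      refine ⟨0, fun j => 0, fun j => j.elim0, fun x y => ?_⟩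
      simp [le_antisymm (hex x y) (hF0 x y)]

end helpers

/-- Cycle decomposition: the generator of an irreducible Markov chain on a finite
state space, with unique stationary probability measure `π`, is a finite sum of
cycle generators, each of which is stationary with respect to `π`. -/
theorem cycle_decomposition {E : Type*} [Fintype E] [DecidableEq E]
    (R : E → E → ℝ) (π : E → ℝ)
    (hR : ∀ x y : E, x ≠ y → 0 ≤ R x y)
    (hirr : ∀ x y : E, Relation.ReflTransGen (fun a b => a ≠ b ∧ 0 < R a b) x y)
    (hπpos : ∀ x, 0 < π x) (hπ1 : ∑ x, π x = 1)
    (hstat : ∀ f : E → ℝ, ∑ x, π x * mcGen R f x = 0) :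
    ∃ (p : ℕ) (Q : Fin p → E → E → ℝ),
      (∀ j, IsCycleRates (Q j)) ∧
      (∀ j, ∀ f : E → ℝ, ∑ x, π x * mcGen (Q j) f x = 0) ∧
      (∀ f : E → ℝ, ∀ x, mcGen R f x = ∑ j, mcGen (Q j) f x) := by
  classical
  set F : E → E → ℝ := fun x y => if x = y then 0 else π x * R x y with hFdef
  have hF0 : ∀ x y, 0 ≤ F x y := by
    intro x y
    simp only [hFdef]
    split_ifs with h
    · exact le_rfl
    · exact mul_nonneg (hπpos x).le (hR x y h)
  have hFd : ∀ x, F x x = 0 := by intro x; simp [hFdef]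
  -- the key pairing identity
  have hpair : ∀ f : E → ℝ, ∀ x, π x * mcGen R f x = ∑ ξ, F x ξ * (f ξ - f x) := by
    intro f x
    rw [mcGen, Finset.mul_sum]
    refine Finset.sum_congr rfl fun ξ _ => ?_
    simp only [hFdef]
    split_ifs with h
    · rw [h]; ring
    · ring
  have hdiv : ∀ z, ∑ x, F x z = ∑ y, F z y := by
    intro z
    have h := hstat (fun ξ => if ξ = z then 1 else 0)
    simp only [hpair] at h
    have h1 : ∀ x ξ : E,
        F x ξ * ((if ξ = z then (1:ℝ) else 0) - (if x = z then 1 else 0))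
        = F x ξ * (if ξ = z then (1:ℝ) else 0) - F x ξ * (if x = z then 1 else 0) := by
      intro x ξ; ring
    simp only [h1, Finset.sum_sub_distrib] at h
    have h2 : ∀ x : E, (∑ ξ, F x ξ * (if ξ = z then (1:ℝ) else 0)) = F x z := by
      intro x
      rw [Finset.sum_eq_single z]
      · simp
      · intro ξ _ hξ; simp [hξ]
      · simp
    have h3 : (∑ x, ∑ ξ, F x ξ * (if x = z then (1:ℝ) else 0)) = ∑ ξ, F z ξ := by
      rw [Finset.sum_eq_single z]
      · simp
      · intro x _ hx; simp [hx]
      · simp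
    simp only [h2, h3] at h
    linarith
  obtain ⟨p, C, hC, hCsum⟩ := flow_decomp
    (Finset.univ.filter (fun p : E × E => 0 < F p.1 p.2)).card F hF0 hFd hdiv le_rfl
  refine ⟨p, fun j x y => (π x)⁻¹ * C j x y, ?_, ?_, ?_⟩
  · -- each Q j is a cycle rate matrix
    intro j
    obtain ⟨m, e, w, he, hw, hCe⟩ := hC j
    refine ⟨m, e, fun i => (π (e i))⁻¹ * w, he, ?_, ?_⟩
    · intro i
      exact mul_pos (inv_pos.mpr (hπpos (e i))) hw
    · intro x y
      show (π x)⁻¹ * C j x y = _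
      rw [hCe]
      unfold cycFlow
      rw [Finset.mul_sum]
      refine Finset.sum_congr rfl fun i _ => ?_
      split_ifs with h
      · rw [h.1]
      · ring
  · -- stationarity of each cycle generator
    intro j f
    obtain ⟨m, e, w, he, hw, hCe⟩ := hC j
    have key : ∀ x, π x * mcGen (fun x y => (π x)⁻¹ * C j x y) f x
        = ∑ ξ, C j x ξ * (f ξ - f x) := by
      intro x
      rw [mcGen, Finset.mul_sum]
      refine Finset.sum_congr rfl fun ξ _ => ?_
      rw [show π x * ((π x)⁻¹ * C j x ξ * (f ξ - f x))
          = (π x * (π x)⁻¹) * (C j x ξ * (f ξ - f x)) by ring,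
        mul_inv_cancel₀ (hπpos x).ne', one_mul]
    simp only [key]
    rw [hCe]
    exact divfree_pairing _ (cycFlow_div e w) f
  · -- decomposition of the generator
    intro f x
    have hπx : π x ≠ 0 := (hπpos x).ne'
    apply mul_left_cancel₀ hπx
    rw [hpair f x, Finset.mul_sum]
    have key : ∀ j : Fin p, π x * mcGen (fun x y => (π x)⁻¹ * C j x y) f x
        = ∑ ξ, C j x ξ * (f ξ - f x) := by
      intro j
      rw [mcGen, Finset.mul_sum]
      refine Finset.sum_congr rfl fun ξ _ => ?_
      rw [show π x * ((π x)⁻¹ * C j x ξ * (f ξ - f x))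
          = (π x * (π x)⁻¹) * (C j x ξ * (f ξ - f x)) by ring,
        mul_inv_cancel₀ (hπpos x).ne', one_mul]
    simp only [key]
    rw [Finset.sum_comm]
    refine Finset.sum_congr rfl fun ξ _ => ?_
    rw [hCsum x ξ, Finset.sum_mul]
end

section
/- For an irreducible Markov chain on finite E with stationary measure π, and disjoint nonempty A, B ⊆ E, the capacity is symmetric with respect to time-reversal: Cap(A,B) = Cap*(B,A), where Cap* is the capacity for the adjoint chain. Explicitly, Σ_{η∈A} π(η)λ(η) P_η[H_B < H_A⁺] = Σ_{ξ∈B} π(ξ)λ(ξ) P*_ξ[H_A < H_B⁺]. -/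
open Finset

/-- Capacity symmetry under time reversal, `Cap(A,B) = Cap*(B,A)`.
Here `h` is the equilibrium potential `h(ξ) = P_ξ[H_A < H_B]` of the chain
(harmonic off `A ∪ B`, equal to `1` on `A` and `0` on `B`), so that for `η ∈ A`,
`λ(η) P_η[H_B < H_A⁺] = Σ_ξ R(η,ξ)(1 - h(ξ))`; and `hstar` is the equilibrium
potential `P*_ξ[H_B < H_A]` of the adjoint chain with rates `R*` determined by
`π(η)R*(η,ξ) = π(ξ)R(ξ,η)`.  The conclusion states
`Σ_{η∈A} π(η)λ(η)P_η[H_B < H_A⁺] = Σ_{ξ∈B} π(ξ)λ*(ξ)P*_ξ[H_A < H_B⁺]`. -/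
theorem capacity_adjoint_symmetry {E : Type*} [Fintype E] [DecidableEq E]
    (R Rstar : E → E → ℝ) (π : E → ℝ) (A B : Finset E)
    (hAne : A.Nonempty) (hBne : B.Nonempty) (hAB : Disjoint A B)
    (hR : ∀ x y : E, x ≠ y → 0 ≤ R x y) (hπpos : ∀ x, 0 < π x)
    (hstat : ∀ f : E → ℝ, ∑ x, π x * mcGen R f x = 0)
    (hadj : ∀ x y : E, π x * Rstar x y = π y * R y x)
    (h hstar : E → ℝ)
    (hh1 : ∀ x ∈ A, h x = 1) (hh0 : ∀ x ∈ B, h x = 0)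
    (hharm : ∀ x, x ∉ A → x ∉ B → mcGen R h x = 0)
    (hs1 : ∀ x ∈ B, hstar x = 1) (hs0 : ∀ x ∈ A, hstar x = 0)
    (hsharm : ∀ x, x ∉ A → x ∉ B → mcGen Rstar hstar x = 0) :
    ∑ η ∈ A, π η * ∑ ξ, R η ξ * (1 - h ξ)
      = ∑ ξ ∈ B, π ξ * ∑ ζ, Rstar ξ ζ * (1 - hstar ζ) := by
  -- pointwise stationarity: column sums of π·R equal π·(row sum)
  have key : ∀ x : E, ∑ y, π y * R y x = π x * ∑ y, R x y := by
    intro x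
    have h0 := hstat (fun z => if z = x then (1:ℝ) else 0)
    have h0' : ∑ y, (π y * R y x - (if y = x then π y * ∑ ξ, R y ξ else 0)) = 0 := by
      refine Eq.trans ?_ h0
      refine Finset.sum_congr rfl fun y _ => (Eq.symm ?_)
      simp only [mcGen]
      have h1 : ∑ ξ, R y ξ * ((if ξ = x then (1:ℝ) else 0) - (if y = x then (1:ℝ) else 0))
          = R y x - (if y = x then (1:ℝ) else 0) * ∑ ξ, R y ξ := by
        have : ∀ ξ ∈ Finset.univ,
            R y ξ * ((if ξ = x then (1:ℝ) else 0) - (if y = x then (1:ℝ) else 0))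
            = R y ξ * (if ξ = x then (1:ℝ) else 0) - (if y = x then (1:ℝ) else 0) * R y ξ := by
          intro ξ _; ring
        rw [Finset.sum_congr rfl this, Finset.sum_sub_distrib, ← Finset.mul_sum]
        congr 1
        simp
      rw [h1]
      split_ifs with hyx <;> ring
    rw [Finset.sum_sub_distrib, Finset.sum_ite_eq' Finset.univ x
      (fun y => π y * ∑ ξ, R y ξ)] at h0'
    simp only [Finset.mem_univ, if_true] at h0'
    linarith
  -- adjoint duality for the generator
  have adj : ∀ f g : E → ℝ,
      ∑ x, π x * g x * mcGen R f x = ∑ x, π x * f x * mcGen Rstar g x := by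
    intro f g
    have e1 : ∀ x : E, π x * g x * mcGen R f x
        = (∑ y, π x * R x y * g x * f y) - g x * f x * (π x * ∑ y, R x y) := by
      intro x
      have e : g x * f x * (π x * ∑ y, R x y) = ∑ y, g x * f x * (π x * R x y) := by
        rw [Finset.mul_sum, Finset.mul_sum]
      rw [e]
      simp only [mcGen, Finset.mul_sum, ← Finset.sum_sub_distrib]
      exact Finset.sum_congr rfl fun y _ => by ring
    have e2 : ∀ x : E, π x * f x * mcGen Rstar g x
        = (∑ y, π y * R y x * g y * f x) - g x * f x * (∑ y, π y * R y x) := by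
      intro x
      have e : g x * f x * (∑ y, π y * R y x) = ∑ y, g x * f x * (π y * R y x) := by
        rw [Finset.mul_sum]
      rw [e]
      simp only [mcGen, Finset.mul_sum, ← Finset.sum_sub_distrib]
      refine Finset.sum_congr rfl fun y _ => ?_
      linear_combination (f x * (g y - g x)) * hadj x y
    simp only [e1, e2, key, Finset.sum_sub_distrib]
    congr 1
    rw [Finset.sum_comm]
  -- stationarity for the adjoint chain
  have statstar : ∀ g : E → ℝ, ∑ x, π x * mcGen Rstar g x = 0 := by
    intro g
    have := adj (fun _ => (1:ℝ)) g
    simp only [mcGen, sub_self, mul_zero, Finset.sum_const_zero] at this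
    simpa [mcGen] using this.symm
  -- LHS = -∑_{A} π·(Lh)
  have lhsA : ∑ η ∈ A, π η * ∑ ξ, R η ξ * (1 - h ξ)
      = -∑ η ∈ A, π η * mcGen R h η := by
    rw [← Finset.sum_neg_distrib]
    refine Finset.sum_congr rfl fun η hη => ?_
    have e : mcGen R h η = -∑ ξ, R η ξ * (1 - h ξ) := by
      simp only [mcGen, hh1 η hη, ← Finset.sum_neg_distrib]
      exact Finset.sum_congr rfl fun ξ _ => by ring
    rw [e]; ring
  -- similarly RHS = -∑_{B} π·(L*h*)
  have rhsB : ∑ ξ ∈ B, π ξ * ∑ ζ, Rstar ξ ζ * (1 - hstar ζ)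
      = -∑ ξ ∈ B, π ξ * mcGen Rstar hstar ξ := by
    rw [← Finset.sum_neg_distrib]
    refine Finset.sum_congr rfl fun ξ hξ => ?_
    have e : mcGen Rstar hstar ξ = -∑ ζ, Rstar ξ ζ * (1 - hstar ζ) := by
      simp only [mcGen, hs1 ξ hξ, ← Finset.sum_neg_distrib]
      exact Finset.sum_congr rfl fun ζ _ => by ring
    rw [e]; ring
  -- split total sums over A and B
  have vanR : ∀ x ∈ Finset.univ, x ∉ A ∪ B → π x * mcGen R h x = 0 := by
    intro x _ hx
    rw [Finset.mem_union] at hx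
    push_neg at hx
    rw [hharm x hx.1 hx.2, mul_zero]
  have vanS : ∀ x ∈ Finset.univ, x ∉ A ∪ B → π x * mcGen Rstar hstar x = 0 := by
    intro x _ hx
    rw [Finset.mem_union] at hx
    push_neg at hx
    rw [hsharm x hx.1 hx.2, mul_zero]
  have splitR : ∑ η ∈ A, π η * mcGen R h η + ∑ η ∈ B, π η * mcGen R h η = 0 := by
    rw [← Finset.sum_union hAB,
      Finset.sum_subset (Finset.subset_univ (A ∪ B)) vanR]
    exact hstat h
  have splitS : ∑ η ∈ A, π η * mcGen Rstar hstar η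
      + ∑ η ∈ B, π η * mcGen Rstar hstar η = 0 := by
    rw [← Finset.sum_union hAB,
      Finset.sum_subset (Finset.subset_univ (A ∪ B)) vanS]
    exact statstar hstar
  -- middle identity via duality
  have TB : ∑ x, π x * hstar x * mcGen R h x = ∑ η ∈ B, π η * mcGen R h η := by
    have van : ∀ x ∈ Finset.univ, x ∉ B → π x * hstar x * mcGen R h x = 0 := by
      intro x _ hx
      by_cases hxA : x ∈ A
      · rw [hs0 x hxA]; ring
      · rw [hharm x hxA hx, mul_zero]
    rw [← Finset.sum_subset (Finset.subset_univ B) van]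
    exact Finset.sum_congr rfl fun x hx => by rw [hs1 x hx]; ring
  have TA : ∑ x, π x * h x * mcGen Rstar hstar x
      = ∑ η ∈ A, π η * mcGen Rstar hstar η := by
    have van : ∀ x ∈ Finset.univ, x ∉ A → π x * h x * mcGen Rstar hstar x = 0 := by
      intro x _ hx
      by_cases hxB : x ∈ B
      · rw [hh0 x hxB]; ring
      · rw [hsharm x hx hxB, mul_zero]
    rw [← Finset.sum_subset (Finset.subset_univ A) van]
    exact Finset.sum_congr rfl fun x hx => by rw [hh1 x hx]; ring
  have main := adj h hstar
  rw [TB, TA] at main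
  rw [lhsA, rhsB]
  linarith
end

section
/- Thomson-type principle for reversible chains: for disjoint nonempty A, B ⊆ E, 1/Cap(A,B) = inf over functions f with (Lf)(η) = 0 for all η ∉ A∪B of D(f) / ( Σ_{η∈A} π(η)(Lf)(η) )², with the infimum attained at the equilibrium potential h_{A,B}. -/
open Finset

/-- Dirichlet form `D(f) = (1/2) Σ_{η,ξ} π(η) R(η,ξ) (f(ξ)-f(η))²`. -/
noncomputable def dForm {E : Type*} [Fintype E] (R : E → E → ℝ) (π : E → ℝ) (f : E → ℝ) : ℝ :=
  (1 / 2) * ∑ η, ∑ ξ, π η * R η ξ * (f ξ - f η) ^ 2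

/-- The Dirichlet bilinear form. -/
noncomputable def dBil {E : Type*} [Fintype E] (R : E → E → ℝ) (π : E → ℝ) (f g : E → ℝ) : ℝ :=
  (1 / 2) * ∑ η, ∑ ξ, π η * R η ξ * ((f ξ - f η) * (g ξ - g η))

lemma dBil_self {E : Type*} [Fintype E] (R : E → E → ℝ) (π : E → ℝ) (f : E → ℝ) :
    dBil R π f f = dForm R π f := by
  unfold dBil dForm
  congr 1
  exact Finset.sum_congr rfl fun η _ => Finset.sum_congr rfl fun ξ _ => by ring

/-- Summation by parts for reversible chains. -/
lemma sbp {E : Type*} [Fintype E] (R : E → E → ℝ) (π : E → ℝ)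
    (hrev : ∀ x y : E, π x * R x y = π y * R y x) (f g : E → ℝ) :
    ∑ η, π η * f η * mcGen R g η = - dBil R π f g := by
  have swap : ∑ η, ∑ ξ, π η * R η ξ * (f ξ * (g ξ - g η))
      = - ∑ η, ∑ ξ, π η * R η ξ * (f η * (g ξ - g η)) := by
    rw [Finset.sum_comm, ← Finset.sum_neg_distrib]
    refine Finset.sum_congr rfl fun ξ _ => ?_
    rw [← Finset.sum_neg_distrib]
    refine Finset.sum_congr rfl fun η _ => ?_
    rw [show π ξ * R ξ η = π η * R η ξ from hrev ξ η]
    ring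
  have expand : ∑ η, π η * f η * mcGen R g η
      = ∑ η, ∑ ξ, π η * R η ξ * (f η * (g ξ - g η)) := by
    refine Finset.sum_congr rfl fun η _ => ?_
    rw [mcGen, Finset.mul_sum]
    exact Finset.sum_congr rfl fun ξ _ => by ring
  have hbil : dBil R π f g = (1/2) * (∑ η, ∑ ξ, π η * R η ξ * (f ξ * (g ξ - g η))
      - ∑ η, ∑ ξ, π η * R η ξ * (f η * (g ξ - g η))) := by
    unfold dBil
    rw [← Finset.sum_sub_distrib]
    congr 1
    refine Finset.sum_congr rfl fun η _ => ?_
    rw [← Finset.sum_sub_distrib]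
    exact Finset.sum_congr rfl fun ξ _ => by ring
  rw [expand, hbil, swap]
  ring

/-- Cauchy–Schwarz for the Dirichlet bilinear form. -/
lemma dBil_cs {E : Type*} [Fintype E] [DecidableEq E] (R : E → E → ℝ) (π : E → ℝ)
    (hR : ∀ x y : E, x ≠ y → 0 ≤ R x y) (hπ : ∀ x, 0 ≤ π x) (f g : E → ℝ) :
    (dBil R π f g) ^ 2 ≤ dBil R π f f * dBil R π g g := by
  classical
  set W : E × E → ℝ := fun p => if p.1 = p.2 then 0 else π p.1 * R p.1 p.2 with hW
  have hWnn : ∀ p : E × E, 0 ≤ W p := by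
    intro p
    by_cases hp : p.1 = p.2
    · simp [hW, hp]
    · simp only [hW, if_neg hp]
      exact mul_nonneg (hπ _) (hR _ _ hp)
  have key : ∀ u v : E → ℝ,
      ∑ p : E × E, (Real.sqrt (W p) * (u p.2 - u p.1)) * (Real.sqrt (W p) * (v p.2 - v p.1))
        = 2 * dBil R π u v := by
    intro u v
    have hterm : ∀ p : E × E,
        (Real.sqrt (W p) * (u p.2 - u p.1)) * (Real.sqrt (W p) * (v p.2 - v p.1))
        = π p.1 * R p.1 p.2 * ((u p.2 - u p.1) * (v p.2 - v p.1)) := by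
      intro p
      by_cases hp : p.1 = p.2
      · simp [hp]
      · have hss : Real.sqrt (W p) * Real.sqrt (W p) = W p := Real.mul_self_sqrt (hWnn p)
        rw [show (Real.sqrt (W p) * (u p.2 - u p.1)) * (Real.sqrt (W p) * (v p.2 - v p.1))
            = (Real.sqrt (W p) * Real.sqrt (W p)) * ((u p.2 - u p.1) * (v p.2 - v p.1)) by ring,
          hss]
        simp [hW, hp]
    rw [Finset.sum_congr rfl (fun p _ => hterm p), ← Finset.univ_product_univ,
      Finset.sum_product]
    unfold dBil
    ring
  set a : E × E → ℝ := fun p => Real.sqrt (W p) * (f p.2 - f p.1) with ha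
  set b : E × E → ℝ := fun p => Real.sqrt (W p) * (g p.2 - g p.1) with hb
  have hcs := Finset.sum_mul_sq_le_sq_mul_sq Finset.univ a b
  have hab : ∑ p : E × E, a p * b p = 2 * dBil R π f g := key f g
  have haa : ∑ p : E × E, a p ^ 2 = 2 * dBil R π f f := by
    simpa [sq, ha] using key f f
  have hbb : ∑ p : E × E, b p ^ 2 = 2 * dBil R π g g := by
    simpa [sq, hb] using key g g
  rw [hab, haa, hbb] at hcs
  nlinarith [hcs]

/-- Thomson-type principle for reversible chains:
`1/Cap(A,B) = inf { D(f) / (Σ_{η∈A} π(η)(Lf)(η))² : (Lf) = 0 off A ∪ B }`,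
attained at the equilibrium potential `h`.  Stated without divisions: for every
`f` harmonic off `A ∪ B`, `(Σ_{η∈A} π(η)(Lf)(η))² ≤ D(f) · Cap(A,B)`, with
equality for `f = h`; here `Cap(A,B) = Σ_{η∈A} π(η) Σ_ξ R(η,ξ)(1-h(ξ))`
`(= Σ_{η∈A} π(η)λ(η)P_η[H_B < H_A⁺])`. -/
theorem thomson_principle_reversible {E : Type*} [Fintype E] [DecidableEq E]
    (R : E → E → ℝ) (π : E → ℝ) (A B : Finset E)
    (hAne : A.Nonempty) (hBne : B.Nonempty) (hAB : Disjoint A B)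
    (hR : ∀ x y : E, x ≠ y → 0 ≤ R x y) (hπpos : ∀ x, 0 < π x)
    (hrev : ∀ x y : E, π x * R x y = π y * R y x)
    (hirr : ∀ x y : E, Relation.ReflTransGen (fun a b => a ≠ b ∧ 0 < R a b) x y)
    (h : E → ℝ)
    (hh1 : ∀ x ∈ A, h x = 1) (hh0 : ∀ x ∈ B, h x = 0)
    (hharm : ∀ x, x ∉ A → x ∉ B → mcGen R h x = 0) :
    (∀ f : E → ℝ, (∀ x, x ∉ A → x ∉ B → mcGen R f x = 0) →
      (∑ η ∈ A, π η * mcGen R f η) ^ 2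
        ≤ dForm R π f * (∑ η ∈ A, π η * ∑ ξ, R η ξ * (1 - h ξ))) ∧
    (∑ η ∈ A, π η * mcGen R h η) ^ 2
        = dForm R π h * (∑ η ∈ A, π η * ∑ ξ, R η ξ * (1 - h ξ)) := by
  -- For f harmonic off A ∪ B: Σ_A π (Lf) = Σ_univ π h (Lf) = - dBil h f
  have keySum : ∀ f : E → ℝ, (∀ x, x ∉ A → x ∉ B → mcGen R f x = 0) →
      ∑ η ∈ A, π η * mcGen R f η = - dBil R π h f := by
    intro f hf
    rw [← sbp R π hrev h f]
    refine (Finset.sum_subset (Finset.subset_univ A) ?_).symm.trans ?_ |>.symm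
    · intro x _ hxA
      by_cases hxB : x ∈ B
      · simp [hh0 x hxB]
      · simp [hf x hxA hxB]
    · exact Finset.sum_congr rfl fun x hx => by rw [hh1 x hx, mul_one]
  -- The capacity equals - Σ_A π (Lh) = dBil h h
  have hcap : ∑ η ∈ A, π η * ∑ ξ, R η ξ * (1 - h ξ) = dBil R π h h := by
    have : ∑ η ∈ A, π η * ∑ ξ, R η ξ * (1 - h ξ)
        = - ∑ η ∈ A, π η * mcGen R h η := by
      rw [← Finset.sum_neg_distrib]
      refine Finset.sum_congr rfl fun η hη => ?_
      have hinner : (∑ ξ, R η ξ * (1 - h ξ)) = - mcGen R h η := by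
        rw [mcGen, ← Finset.sum_neg_distrib]
        exact Finset.sum_congr rfl fun ξ _ => by rw [hh1 η hη]; ring
      rw [hinner]; ring
    rw [this, keySum h hharm, neg_neg]
  constructor
  · intro f hf
    rw [keySum f hf, hcap, neg_sq, ← dBil_self]
    have := dBil_cs R π hR (fun x => (hπpos x).le) h f
    calc dBil R π h f ^ 2 ≤ dBil R π h h * dBil R π f f := this
      _ = dBil R π f f * dBil R π h h := mul_comm _ _
  · rw [keySum h hharm, hcap, neg_sq, ← dBil_self, sq]
end

section
/- Collapsing preserves Dirichlet-type bilinear forms: with the collapsed chain as above, for any functions F, G: E → ℝ that are constant on A, and f, g: E_A → ℝ their induced functions on the collapsed space, one has ⟨L^{C,A} f, g⟩_{π^{C,A}} = ⟨L F, G⟩_π. -/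
open Finset

/-- The state space `E_A = (E \ A) ∪ {𝔡}` obtained by collapsing `A` to a point
(`none` plays the role of `𝔡`). -/
abbrev CollapsedSpace {E : Type*} [DecidableEq E] (A : Finset E) :=
  Option {x : E // x ∉ A}

/-- Jump rates of the chain obtained by collapsing the set `A` to the point `𝔡`. -/
noncomputable def collapsedRates {E : Type*} [Fintype E] [DecidableEq E]
    (R : E → E → ℝ) (π : E → ℝ) (A : Finset E) :
    CollapsedSpace A → CollapsedSpace A → ℝ
  | some x, some y => R x y
  | some x, none => ∑ ζ ∈ A, R x ζ
  | none, some y => (∑ ξ ∈ A, π ξ)⁻¹ * ∑ ξ ∈ A, π ξ * R ξ y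
  | none, none => 0

/-- The measure `π^{C,A}` on the collapsed space: `π^{C,A}(𝔡) = π(A)` and
`π^{C,A}(η) = π(η)` for `η ∉ A`. -/
noncomputable def collapsedMeasure {E : Type*} [Fintype E] [DecidableEq E]
    (π : E → ℝ) (A : Finset E) : CollapsedSpace A → ℝ
  | some x => π x
  | none => ∑ ξ ∈ A, π ξ

/-- Collapsing preserves the Dirichlet-type bilinear form: for functions `F`, `G`
on `E` that are constant on `A`, and `f`, `g` the induced functions on the
collapsed space, `⟨L^{C,A} f, g⟩_{π^{C,A}} = ⟨L F, G⟩_π`. -/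
theorem collapsed_bilinear_form {E : Type*} [Fintype E] [DecidableEq E]
    (R : E → E → ℝ) (π : E → ℝ) (A : Finset E)
    (hAne : A.Nonempty) (hπpos : ∀ x, 0 < π x)
    (F G : E → ℝ)
    (hF : ∀ a ∈ A, ∀ b ∈ A, F a = F b) (hG : ∀ a ∈ A, ∀ b ∈ A, G a = G b)
    (f g : CollapsedSpace A → ℝ)
    (hfF : ∀ x : {x : E // x ∉ A}, f (some x) = F x)
    (hfd : ∀ a ∈ A, f none = F a)
    (hgG : ∀ x : {x : E // x ∉ A}, g (some x) = G x)
    (hgd : ∀ a ∈ A, g none = G a) :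
    ∑ x : CollapsedSpace A,
        mcGen (collapsedRates R π A) f x * g x * collapsedMeasure π A x
      = ∑ η, mcGen R F η * G η * π η := by
  classical
  have hπA' : (∑ ξ ∈ A, π ξ) ≠ 0 :=
    ne_of_gt (Finset.sum_pos (fun i _ => hπpos i) hAne)
  have hsub : ∀ (h : E → ℝ),
      (∑ x : {x : E // x ∉ A}, h x) = ∑ η ∈ Aᶜ, h η := fun h =>
    (Finset.sum_subtype Aᶜ (fun x => Finset.mem_compl) h).symm
  have hA : ∀ x : {x : E // x ∉ A},
      mcGen (collapsedRates R π A) f (some x) = mcGen R F x := by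
    intro x
    unfold mcGen
    rw [Fintype.sum_option]
    have h1 : (∑ y : {x : E // x ∉ A},
        collapsedRates R π A (some x) (some y) * (f (some y) - f (some x)))
        = ∑ η ∈ Aᶜ, R x η * (F η - F x) := by
      simp only [collapsedRates, hfF]
      exact hsub (fun η => R x η * (F η - F x))
    rw [h1]
    rw [← Finset.sum_compl_add_sum A (fun ξ => R x ξ * (F ξ - F x.1))]
    have h2 : (∑ ξ ∈ A, R x.1 ξ * (F ξ - F x.1))
        = collapsedRates R π A (some x) none * (f none - f (some x)) := by
      simp only [collapsedRates, Finset.sum_mul, hfF]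
      refine Finset.sum_congr rfl fun ξ hξ => ?_
      rw [hfd ξ hξ]
    rw [h2]; ring
  have hB : mcGen (collapsedRates R π A) f none * g none * collapsedMeasure π A none
      = ∑ η ∈ A, mcGen R F η * G η * π η := by
    unfold mcGen
    rw [Fintype.sum_option]
    simp only [collapsedRates, collapsedMeasure, zero_mul, zero_add, hfF]
    rw [hsub (fun y => ((∑ ξ ∈ A, π ξ)⁻¹ * ∑ ξ ∈ A, π ξ * R ξ y) * (F y - f none))]
    have hL : (∑ η ∈ Aᶜ, ((∑ ξ ∈ A, π ξ)⁻¹ * ∑ ξ ∈ A, π ξ * R ξ η) * (F η - f none))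
          * g none * (∑ ξ ∈ A, π ξ)
        = ∑ η ∈ Aᶜ, ∑ ξ ∈ A, π ξ * R ξ η * (F η - f none) * g none := by
      rw [Finset.sum_mul, Finset.sum_mul]
      refine Finset.sum_congr rfl fun η _ => ?_
      have he : ((∑ ξ ∈ A, π ξ)⁻¹ * ∑ ξ ∈ A, π ξ * R ξ η) * (F η - f none) * g none
            * ∑ ξ ∈ A, π ξ
          = (∑ ξ ∈ A, π ξ * R ξ η) * ((F η - f none) * g none) := by
        field_simp
      rw [he, Finset.sum_mul]
      exact Finset.sum_congr rfl fun ξ _ => by ring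
    rw [hL, Finset.sum_comm]
    refine Finset.sum_congr rfl fun ξ hξ => ?_
    have hR : (∑ η, R ξ η * (F η - F ξ)) = ∑ η ∈ Aᶜ, R ξ η * (F η - F ξ) := by
      rw [← Finset.sum_compl_add_sum A (fun η => R ξ η * (F η - F ξ))]
      have : (∑ η ∈ A, R ξ η * (F η - F ξ)) = 0 := by
        refine Finset.sum_eq_zero fun η hη => ?_
        rw [hF η hη ξ hξ]; ring
      rw [this, add_zero]
    rw [hR, Finset.sum_mul, Finset.sum_mul]
    refine Finset.sum_congr rfl fun η _ => ?_
    rw [hfd ξ hξ, hgd ξ hξ]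
    ring
  rw [Fintype.sum_option, hB]
  have h1 : (∑ x : {x : E // x ∉ A}, mcGen (collapsedRates R π A) f (some x)
        * g (some x) * collapsedMeasure π A (some x))
      = ∑ η ∈ Aᶜ, mcGen R F η * G η * π η := by
    rw [← hsub (fun η => mcGen R F η * G η * π η)]
    exact Fintype.sum_congr _ _ fun x => by rw [hA x, hgG x]; rfl
  rw [h1, add_comm, Finset.sum_compl_add_sum]
end
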